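/- Let H = L²(Ω) × (H¹(Ω)/ℝ) with the ℋ inner product ((u,s),(u',s')) = ∫cuu' + σ∇s·∇s', let A be the Graetz operator in the balanced case (∫_Ω h = 0, Neumann boundary conditions) and φ₀ = (1, Δ_σ^{-1}h). Then φ₀ ∈ D(A), Aφ₀ = 0, and ‖φ₀‖²_ℋ = ∫_Ω c + ∫_Ω σ|∇Δ_σ^{-1}h|² = ∫_Ω (c − h·Δ_σ^{-1}h) > 0. -/

import Mathlib

open MeasureTheory RealInnerProductSpace

/-- Divergence of a vector field on `ℝ²`. -/
noncomputable def div2 (F : EuclideanSpace ℝ (Fin 2) → EuclideanSpace ℝ (Fin 2))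
    (x : EuclideanSpace ℝ (Fin 2)) : ℝ :=
  ∑ i : Fin 2, fderiv ℝ F x (EuclideanSpace.single i 1) i

/-- The kernel of the Graetz operator in the balanced case: with
`s = Δ_σ^{-1}h` (zero-mean Neumann solution of `div(σ∇s) = h`, expressed both
pointwise and in weak form), `φ₀ = (1, s)` satisfies `Aφ₀ = 0` (i.e. the first
component `hc⁻¹·1 − c⁻¹ div(σ∇s)` vanishes on `Ω`), and
`‖φ₀‖²_ℋ = ∫_Ω c + ∫_Ω σ|∇s|² = ∫_Ω (c − h·s) > 0`. -/
theorem stmt17 (Ω : Set (EuclideanSpace ℝ (Fin 2))) (hΩ : MeasurableSet Ω)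
    (hΩpos : 0 < volume Ω) (hΩfin : volume Ω < ⊤)
    (c σ h s : EuclideanSpace ℝ (Fin 2) → ℝ)
    (c₀ : ℝ) (hc₀ : 0 < c₀) (hc : ∀ x ∈ Ω, c₀ ≤ c x)
    (hσ : ∀ x ∈ Ω, 0 ≤ σ x) (hcne : ∀ x ∈ Ω, c x ≠ 0)
    (hhmean : (∫ x in Ω, h x) = 0)
    (hsdiff : Differentiable ℝ s) (hsmean : (∫ x in Ω, s x) = 0)
    (hspde : ∀ x ∈ Ω, div2 (fun y => σ y • gradient s y) x = h x)
    (hweak : ∀ φ : EuclideanSpace ℝ (Fin 2) → ℝ, Differentiable ℝ φ →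
      (∫ x in Ω, σ x * ⟪gradient s x, gradient φ x⟫) = -(∫ x in Ω, h x * φ x))
    (hintc : IntegrableOn c Ω)
    (hinths : IntegrableOn (fun x => h x * s x) Ω)
    (hintσ : IntegrableOn (fun x => σ x * ‖gradient s x‖ ^ 2) Ω) :
    -- `Aφ₀ = 0` : first component of `A(1,s)` vanishes on `Ω`
    (∀ x ∈ Ω, h x * (c x)⁻¹ * 1 - (c x)⁻¹ * div2 (fun y => σ y • gradient s y) x = 0) ∧
    -- `‖φ₀‖²_ℋ = ∫ c·1² + ∫ σ|∇s|² = ∫ (c − h·s) > 0`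
    (∫ x in Ω, c x * 1 * 1) + (∫ x in Ω, σ x * ‖gradient s x‖ ^ 2)
      = (∫ x in Ω, (c x - h x * s x)) ∧
    0 < ∫ x in Ω, (c x - h x * s x) := by
  have hσs : (∫ x in Ω, σ x * ‖gradient s x‖ ^ 2) = -(∫ x in Ω, h x * s x) := by
    have := hweak s hsdiff
    rw [← this]
    refine setIntegral_congr_fun hΩ fun x _ => ?_
    rw [real_inner_self_eq_norm_sq]
  have hkey : (∫ x in Ω, c x * 1 * 1) + (∫ x in Ω, σ x * ‖gradient s x‖ ^ 2)
      = (∫ x in Ω, (c x - h x * s x)) := by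
    rw [integral_sub hintc hinths, hσs]
    simp [sub_eq_add_neg]
  refine ⟨fun x hx => ?_, hkey, ?_⟩
  · rw [hspde x hx]; ring
  · rw [← hkey]
    have h1 : 0 < ∫ x in Ω, c x * 1 * 1 := by
      have : 0 < ∫ x in Ω, c x := by
        calc 0 < c₀ * (volume Ω).toReal :=
            mul_pos hc₀ (ENNReal.toReal_pos hΩpos.ne' hΩfin.ne)
          _ ≤ ∫ x in Ω, c x := by
            have hcst : (∫ _ in Ω, c₀) = c₀ * (volume Ω).toReal := by
              rw [setIntegral_const, smul_eq_mul, mul_comm, measureReal_def]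
            rw [← hcst]
            exact setIntegral_mono_on (integrableOn_const hΩfin.ne) hintc hΩ hc
      simpa only [mul_one] using this
    have h2 : 0 ≤ ∫ x in Ω, σ x * ‖gradient s x‖ ^ 2 :=
      setIntegral_nonneg hΩ fun x hx => mul_nonneg (hσ x hx) (sq_nonneg _)
    linarith
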